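/- arXiv:1703.07393 — 3 statements merged into one kernel-verified Lean document; each statement's English description precedes it below -/
import Mathlib

section
/- If the columns of [Z₁; Z₂] span an invariant subspace of the Hamiltonian matrix H = [[A, -M],[-C^T C, -A^T]] with H[Z₁;Z₂] = [Z₁;Z₂]Λ, and Z₁ is invertible, then X = Z₂ Z₁^{-1} solves the algebraic Riccati equation A^T X + X A + C^T C - X M X = 0. -/
open Matrix

/-- If the columns of `[Z₁; Z₂]` span an invariant subspace of the Hamiltonian
`H = [[A, -M], [-CᵀC, -Aᵀ]]` (i.e. `A Z₁ - M Z₂ = Z₁ Λ` and `-CᵀC Z₁ - Aᵀ Z₂ = Z₂ Λ`)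
with `Z₁` invertible, then `X = Z₂ Z₁⁻¹` solves the ARE
`Aᵀ X + X A + Cᵀ C - X M X = 0`. -/
theorem hamiltonian_invariant_subspace_solves_ARE
    (n m : ℕ)
    (A M : Matrix (Fin n) (Fin n) ℝ) (C : Matrix (Fin m) (Fin n) ℝ)
    (Z₁ Z₂ Λ : Matrix (Fin n) (Fin n) ℝ)
    (h1 : A * Z₁ - M * Z₂ = Z₁ * Λ)
    (h2 : -(Cᵀ * C) * Z₁ - Aᵀ * Z₂ = Z₂ * Λ)
    (hZ : IsUnit Z₁) :
    Aᵀ * (Z₂ * Z₁⁻¹) + (Z₂ * Z₁⁻¹) * A + Cᵀ * C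
      - (Z₂ * Z₁⁻¹) * M * (Z₂ * Z₁⁻¹) = 0 := by
  have hdet : IsUnit Z₁.det := (Matrix.isUnit_iff_isUnit_det Z₁).mp hZ
  have hinv : Z₁⁻¹ * Z₁ = 1 := Matrix.nonsing_inv_mul Z₁ hdet
  have hinv' : Z₁ * Z₁⁻¹ = 1 := Matrix.mul_nonsing_inv Z₁ hdet
  set X := Z₂ * Z₁⁻¹ with hX
  have hXZ : X * Z₁ = Z₂ := by rw [hX, mul_assoc, hinv, mul_one]
  have key : (Aᵀ * X + X * A + Cᵀ * C - X * M * X) * Z₁ = 0 := by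
    have e1' : X * A * Z₁ - X * M * Z₂ = Z₂ * Λ := by
      calc X * A * Z₁ - X * M * Z₂ = X * (A * Z₁ - M * Z₂) := by noncomm_ring
        _ = X * (Z₁ * Λ) := by rw [h1]
        _ = Z₂ * Λ := by rw [← mul_assoc, hXZ]
    calc (Aᵀ * X + X * A + Cᵀ * C - X * M * X) * Z₁
        = Aᵀ * (X * Z₁) + (X * A * Z₁ - X * M * (X * Z₁)) + Cᵀ * C * Z₁ := by
          noncomm_ring
      _ = Aᵀ * Z₂ + (Z₂ * Λ) + Cᵀ * C * Z₁ := by rw [hXZ, e1']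
      _ = 0 := by rw [← h2]; noncomm_ring
  have := congrArg (· * Z₁⁻¹) key
  simpa [mul_assoc, hinv'] using this
end

section
/- Let X̄ = Z_{2κ}(Z_{2κ}^T Z_{1κ})^{-1} Z_{2κ}^T with Z_{2κ}^T Z_{1κ} invertible. If X̄ is symmetric, then its residue R(X̄) := A^T X̄ + X̄ A + C₁^T C₁ - X̄ M X̄ satisfies R(X̄) = C̄₁^T C̄₁ where C̄₁^T = (I - Z_{2κ}(Z_{2κ}^T Z_{1κ})^{-1} Z_{1κ}^T) C₁^T, provided the columns of [Z_{1κ}; Z_{2κ}] span an invariant subspace of the Hamiltonian H with H[Z_{1κ}; Z_{2κ}] = [Z_{1κ}; Z_{2κ}]Λ_κ. -/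
open Matrix

/-- Residue formula for the Hamiltonian-based approximate ARE solution
`X̄ = Z₂κ (Z₂κᵀ Z₁κ)⁻¹ Z₂κᵀ` (Lemma 2 of the paper): if the columns of
`[Z₁κ; Z₂κ]` span an invariant subspace of the Hamiltonian and `X̄` is symmetric,
then `Aᵀ X̄ + X̄ A + C₁ᵀ C₁ - X̄ M X̄ = C̄₁ᵀ C̄₁` with
`C̄₁ᵀ = (I - Z₂κ (Z₂κᵀ Z₁κ)⁻¹ Z₁κᵀ) C₁ᵀ`. -/
theorem approximate_ARE_residue
    (n m κ : ℕ)
    (A M : Matrix (Fin n) (Fin n) ℝ) (hM : Mᵀ = M)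
    (C₁ : Matrix (Fin m) (Fin n) ℝ)
    (Z₁κ Z₂κ : Matrix (Fin n) (Fin κ) ℝ) (Λκ : Matrix (Fin κ) (Fin κ) ℝ)
    (h1 : A * Z₁κ - M * Z₂κ = Z₁κ * Λκ)
    (h2 : -(C₁ᵀ * C₁) * Z₁κ - Aᵀ * Z₂κ = Z₂κ * Λκ)
    (hZ : IsUnit (Z₂κᵀ * Z₁κ))
    (Xbar : Matrix (Fin n) (Fin n) ℝ)
    (hX : Xbar = Z₂κ * (Z₂κᵀ * Z₁κ)⁻¹ * Z₂κᵀ)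
    (hsym : Xbarᵀ = Xbar) :
    Aᵀ * Xbar + Xbar * A + C₁ᵀ * C₁ - Xbar * M * Xbar =
      ((1 - Z₂κ * (Z₂κᵀ * Z₁κ)⁻¹ * Z₁κᵀ) * C₁ᵀ) *
        ((1 - Z₂κ * (Z₂κᵀ * Z₁κ)⁻¹ * Z₁κᵀ) * C₁ᵀ)ᵀ := by
  have hdet : IsUnit (Z₂κᵀ * Z₁κ).det := (Matrix.isUnit_iff_isUnit_det _).mp hZ
  set S : Matrix (Fin κ) (Fin κ) ℝ := (Z₂κᵀ * Z₁κ)⁻¹ with hSdef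
  have hKS : (Z₂κᵀ * Z₁κ) * S = 1 := Matrix.mul_nonsing_inv _ hdet
  have hSK : S * (Z₂κᵀ * Z₁κ) = 1 := Matrix.nonsing_inv_mul _ hdet
  have hST : Sᵀ = (Z₁κᵀ * Z₂κ)⁻¹ := by
    rw [hSdef, Matrix.transpose_nonsing_inv, Matrix.transpose_mul, Matrix.transpose_transpose]
  have hdetT : IsUnit (Z₁κᵀ * Z₂κ).det := by
    have : (Z₁κᵀ * Z₂κ) = (Z₂κᵀ * Z₁κ)ᵀ := by
      rw [Matrix.transpose_mul, Matrix.transpose_transpose]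
    rw [this, Matrix.det_transpose]; exact hdet
  have hTS' : (Z₁κᵀ * Z₂κ) * Sᵀ = 1 := by rw [hST]; exact Matrix.mul_nonsing_inv _ hdetT
  have htrans : Z₂κ * Sᵀ * Z₂κᵀ = Z₂κ * S * Z₂κᵀ := by
    conv_rhs => rw [← hX, ← hsym, hX]
    simp only [Matrix.transpose_mul, Matrix.transpose_transpose, Matrix.mul_assoc]
  have hK2 : Z₁κᵀ * Z₂κ = Z₂κᵀ * Z₁κ := by
    calc Z₁κᵀ * Z₂κ = (Z₁κᵀ * Z₂κ) * (S * (Z₂κᵀ * Z₁κ)) := by rw [hSK, mul_one]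
      _ = Z₁κᵀ * (Z₂κ * S * Z₂κᵀ) * Z₁κ := by simp only [Matrix.mul_assoc]
      _ = Z₁κᵀ * (Z₂κ * Sᵀ * Z₂κᵀ) * Z₁κ := by rw [htrans]
      _ = ((Z₁κᵀ * Z₂κ) * Sᵀ) * (Z₂κᵀ * Z₁κ) := by simp only [Matrix.mul_assoc]
      _ = Z₂κᵀ * Z₁κ := by rw [hTS', one_mul]
  have hSsym : Sᵀ = S := by rw [hST, hK2]
  have ha : Aᵀ * Z₂κ = -(C₁ᵀ * (C₁ * Z₁κ)) - Z₂κ * Λκ := by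
    rw [← h2, Matrix.neg_mul, Matrix.mul_assoc]; abel
  have hm : M * Z₂κ = A * Z₁κ - Z₁κ * Λκ := by rw [← h1]; abel
  have hb : Z₂κᵀ * A = -(Z₁κᵀ * (C₁ᵀ * C₁)) - Λκᵀ * Z₂κᵀ := by
    have h := congrArg Matrix.transpose ha
    simp only [Matrix.transpose_mul, Matrix.transpose_sub, Matrix.transpose_neg,
      Matrix.transpose_transpose, Matrix.mul_assoc] at h
    simpa [Matrix.mul_assoc] using h
  have hcM : Z₂κᵀ * M = Z₁κᵀ * Aᵀ - Λκᵀ * Z₁κᵀ := by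
    have h := congrArg Matrix.transpose hm
    simp only [Matrix.transpose_mul, Matrix.transpose_sub, hM] at h
    exact h
  -- Z₂ᵀ M Z₂
  have eZMZ : Z₂κᵀ * M * Z₂κ
      = -(Z₁κᵀ * (C₁ᵀ * (C₁ * Z₁κ))) - (Z₂κᵀ * Z₁κ) * Λκ - Λκᵀ * (Z₂κᵀ * Z₁κ) := by
    calc Z₂κᵀ * M * Z₂κ = (Z₁κᵀ * Aᵀ - Λκᵀ * Z₁κᵀ) * Z₂κ := by rw [hcM]
      _ = Z₁κᵀ * (Aᵀ * Z₂κ) - Λκᵀ * (Z₁κᵀ * Z₂κ) := by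
          simp only [Matrix.sub_mul, Matrix.mul_assoc]
      _ = Z₁κᵀ * (-(C₁ᵀ * (C₁ * Z₁κ)) - Z₂κ * Λκ) - Λκᵀ * (Z₂κᵀ * Z₁κ) := by rw [ha, hK2]
      _ = -(Z₁κᵀ * (C₁ᵀ * (C₁ * Z₁κ))) - Z₁κᵀ * (Z₂κ * Λκ) - Λκᵀ * (Z₂κᵀ * Z₁κ) := by
          simp only [Matrix.mul_sub, Matrix.mul_neg]
      _ = _ := by rw [← Matrix.mul_assoc Z₁κᵀ Z₂κ Λκ, hK2]
  have e1 : Aᵀ * (Z₂κ * S * Z₂κᵀ)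
      = -(C₁ᵀ * (C₁ * (Z₁κ * (S * Z₂κᵀ)))) - Z₂κ * (Λκ * (S * Z₂κᵀ)) := by
    calc Aᵀ * (Z₂κ * S * Z₂κᵀ) = (Aᵀ * Z₂κ) * (S * Z₂κᵀ) := by simp only [Matrix.mul_assoc]
      _ = (-(C₁ᵀ * (C₁ * Z₁κ)) - Z₂κ * Λκ) * (S * Z₂κᵀ) := by rw [ha]
      _ = _ := by simp only [Matrix.sub_mul, Matrix.neg_mul, Matrix.mul_assoc]
  have e2 : Z₂κ * S * Z₂κᵀ * A
      = -(Z₂κ * (S * (Z₁κᵀ * (C₁ᵀ * C₁)))) - Z₂κ * (S * (Λκᵀ * Z₂κᵀ)) := by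
    calc Z₂κ * S * Z₂κᵀ * A = Z₂κ * (S * (Z₂κᵀ * A)) := by simp only [Matrix.mul_assoc]
      _ = Z₂κ * (S * (-(Z₁κᵀ * (C₁ᵀ * C₁)) - Λκᵀ * Z₂κᵀ)) := by rw [hb]
      _ = _ := by simp only [Matrix.mul_sub, Matrix.mul_neg]
  have m2 : Z₂κ * S * ((Z₂κᵀ * Z₁κ) * Λκ) * (S * Z₂κᵀ) = Z₂κ * (Λκ * (S * Z₂κᵀ)) := by
    calc Z₂κ * S * ((Z₂κᵀ * Z₁κ) * Λκ) * (S * Z₂κᵀ)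
        = Z₂κ * (S * (Z₂κᵀ * Z₁κ)) * (Λκ * (S * Z₂κᵀ)) := by simp only [Matrix.mul_assoc]
      _ = _ := by rw [hSK, Matrix.mul_one]
  have m3 : Z₂κ * S * (Λκᵀ * (Z₂κᵀ * Z₁κ)) * (S * Z₂κᵀ) = Z₂κ * (S * (Λκᵀ * Z₂κᵀ)) := by
    calc Z₂κ * S * (Λκᵀ * (Z₂κᵀ * Z₁κ)) * (S * Z₂κᵀ)
        = Z₂κ * S * Λκᵀ * ((Z₂κᵀ * Z₁κ) * S) * Z₂κᵀ := by simp only [Matrix.mul_assoc]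
      _ = _ := by rw [hKS, Matrix.mul_one]; simp only [Matrix.mul_assoc]
  have e4 : Z₂κ * S * Z₂κᵀ * M * (Z₂κ * S * Z₂κᵀ)
      = -(Z₂κ * (S * (Z₁κᵀ * (C₁ᵀ * (C₁ * (Z₁κ * (S * Z₂κᵀ)))))))
        - Z₂κ * (Λκ * (S * Z₂κᵀ)) - Z₂κ * (S * (Λκᵀ * Z₂κᵀ)) := by
    calc Z₂κ * S * Z₂κᵀ * M * (Z₂κ * S * Z₂κᵀ)
        = Z₂κ * S * (Z₂κᵀ * M * Z₂κ) * (S * Z₂κᵀ) := by simp only [Matrix.mul_assoc]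
      _ = Z₂κ * S * (-(Z₁κᵀ * (C₁ᵀ * (C₁ * Z₁κ))) - (Z₂κᵀ * Z₁κ) * Λκ
            - Λκᵀ * (Z₂κᵀ * Z₁κ)) * (S * Z₂κᵀ) := by rw [eZMZ]
      _ = -(Z₂κ * S * (Z₁κᵀ * (C₁ᵀ * (C₁ * Z₁κ))) * (S * Z₂κᵀ))
            - Z₂κ * S * ((Z₂κᵀ * Z₁κ) * Λκ) * (S * Z₂κᵀ)
            - Z₂κ * S * (Λκᵀ * (Z₂κᵀ * Z₁κ)) * (S * Z₂κᵀ) := by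
          simp only [Matrix.mul_sub, Matrix.mul_neg, Matrix.sub_mul, Matrix.neg_mul]
      _ = _ := by rw [m2, m3]; simp only [Matrix.mul_assoc]
  have hT : ((1 - Z₂κ * S * Z₁κᵀ) * C₁ᵀ)ᵀ = C₁ * (1 - Z₁κ * (S * Z₂κᵀ)) := by
    simp only [Matrix.transpose_mul, Matrix.transpose_sub, Matrix.transpose_one,
      Matrix.transpose_transpose, hSsym, Matrix.mul_assoc]
  have eR : ((1 - Z₂κ * S * Z₁κᵀ) * C₁ᵀ) * ((1 - Z₂κ * S * Z₁κᵀ) * C₁ᵀ)ᵀ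
      = C₁ᵀ * C₁ - C₁ᵀ * (C₁ * (Z₁κ * (S * Z₂κᵀ))) - Z₂κ * (S * (Z₁κᵀ * (C₁ᵀ * C₁)))
        + Z₂κ * (S * (Z₁κᵀ * (C₁ᵀ * (C₁ * (Z₁κ * (S * Z₂κᵀ)))))) := by
    rw [hT]
    simp only [Matrix.sub_mul, Matrix.mul_sub, Matrix.one_mul, Matrix.mul_one,
      Matrix.mul_assoc]
    abel
  rw [hX, e1, e2, e4, eR]
  abel
end

section
/- If X solves the ARE A^T X + X A + C^T C - X M X = 0 with X = X^T ⪰ 0 and A - M X Hurwitz, and X̄ = X̄^T satisfies the same ARE with residue R(X̄) = A^T X̄ + X̄ A + C^T C - X̄ M X̄ ⪰ 0 and M ⪰ 0 and A - M X̄ Hurwitz, then X̄ ⪯ X. -/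
open Matrix NormedSpace Filter Topology

attribute [local instance] Matrix.linftyOpNormedRing Matrix.linftyOpNormedAlgebra

section Aux

variable {n : ℕ}

/-- `M ↦ M *ᵥ v` as a continuous linear map. -/
noncomputable def mulVecCLM (K : Type*) [RCLike K] (n : ℕ) (v : Fin n → K) :
    Matrix (Fin n) (Fin n) K →L[K] (Fin n → K) :=
  LinearMap.toContinuousLinearMap
    { toFun := fun M => M *ᵥ v
      map_add' := fun M N => Matrix.add_mulVec M N v
      map_smul' := fun c M => Matrix.smul_mulVec c M v }

@[simp] lemma mulVecCLM_apply (K : Type*) [RCLike K] (n : ℕ) (v : Fin n → K)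
    (M : Matrix (Fin n) (Fin n) K) : mulVecCLM K n v M = M *ᵥ v := rfl

lemma exp_mulVec_eq_sum (N : Matrix (Fin n) (Fin n) ℂ) (v : Fin n → ℂ) (k : ℕ)
    (hk : N ^ k *ᵥ v = 0) :
    exp N *ᵥ v = ∑ j ∈ Finset.range k, ((j.factorial : ℂ)⁻¹) • (N ^ j *ᵥ v) := by
  have hs : Summable fun j : ℕ => ((j.factorial : ℂ)⁻¹) • N ^ j := expSeries_summable' N
  have h1 : exp N *ᵥ v = ∑' j : ℕ, ((j.factorial : ℂ)⁻¹) • (N ^ j *ᵥ v) := by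
    have h2 := (mulVecCLM ℂ n v).map_tsum hs
    rw [exp_eq_tsum ℂ]
    simpa [Matrix.smul_mulVec] using h2
  rw [h1]
  refine tsum_eq_sum ?_
  intro j hj
  simp only [Finset.mem_range, not_lt] at hj
  have hj' : j = (j - k) + k := by omega
  have : N ^ j *ᵥ v = 0 := by
    rw [hj', pow_add, ← Matrix.mulVec_mulVec, hk, Matrix.mulVec_zero]
  simp [this]

lemma tendsto_exp_genEig (G : Matrix (Fin n) (Fin n) ℂ) (μ : ℂ)
    (hμ : μ.re < 0) (k : ℕ) (v : Fin n → ℂ) (hv : (G - μ • 1) ^ k *ᵥ v = 0) :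
    Tendsto (fun t : ℝ => exp ((t : ℂ) • G) *ᵥ v) atTop (𝓝 0) := by
  set N : Matrix (Fin n) (Fin n) ℂ := G - μ • 1 with hN
  have hsplit : ∀ t : ℝ, exp ((t : ℂ) • G) *ᵥ v =
      ∑ j ∈ Finset.range k,
        (Complex.exp ((t : ℂ) * μ) * ((t : ℂ) ^ j * (j.factorial : ℂ)⁻¹)) • (N ^ j *ᵥ v) := by
    intro t
    have hGsum : (t : ℂ) • G = (((t : ℂ) * μ) • (1 : Matrix (Fin n) (Fin n) ℂ)) + (t : ℂ) • N := by
      rw [hN, smul_sub, smul_smul]; abel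
    have hcomm : Commute (((t : ℂ) * μ) • (1 : Matrix (Fin n) (Fin n) ℂ)) ((t : ℂ) • N) :=
      ((Commute.one_left _).smul_left _).smul_right _
    have h1 : exp (((t : ℂ) * μ) • (1 : Matrix (Fin n) (Fin n) ℂ))
        = Complex.exp ((t : ℂ) * μ) • (1 : Matrix (Fin n) (Fin n) ℂ) := by
      rw [← Algebra.algebraMap_eq_smul_one]
      erw [← algebraMap_exp_comm]
      rw [← Complex.exp_eq_exp_ℂ,
        Algebra.algebraMap_eq_smul_one]
    have hNk : ((t : ℂ) • N) ^ k *ᵥ v = 0 := by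
      rw [smul_pow, Matrix.smul_mulVec, hv, smul_zero]
    rw [hGsum, Matrix.exp_add_of_commute _ _ hcomm, h1, smul_mul_assoc, one_mul,
      Matrix.smul_mulVec, exp_mulVec_eq_sum _ v k hNk, Finset.smul_sum]
    refine Finset.sum_congr rfl fun j hj => ?_
    rw [smul_pow, Matrix.smul_mulVec, smul_smul, smul_smul]
    ring_nf
  rw [show (0 : Fin n → ℂ) = ∑ j ∈ Finset.range k, (0 : Fin n → ℂ) by simp]
  refine Tendsto.congr (fun t => (hsplit t).symm) (tendsto_finset_sum _ fun j hj => ?_)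
  have hscal : Tendsto (fun t : ℝ => Complex.exp ((t : ℂ) * μ) * ((t : ℂ) ^ j * (j.factorial : ℂ)⁻¹))
      atTop (𝓝 0) := by
    rw [tendsto_zero_iff_norm_tendsto_zero]
    have hnorm : ∀ᶠ t : ℝ in atTop,
        ‖Complex.exp ((t : ℂ) * μ) * ((t : ℂ) ^ j * (j.factorial : ℂ)⁻¹)‖
          = ((-μ.re)⁻¹ ^ j * (j.factorial : ℝ)⁻¹) * ((-μ.re * t) ^ j * Real.exp (-(-μ.re * t))) := by
      filter_upwards [eventually_ge_atTop (0 : ℝ)] with t ht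
      rw [norm_mul, norm_mul, Complex.norm_exp]
      have : ((t : ℂ) * μ).re = t * μ.re := by simp
      rw [this]
      rw [norm_pow, norm_inv, Complex.norm_natCast, Complex.norm_real, Real.norm_of_nonneg ht]
      rw [mul_pow]
      have hb : (0 : ℝ) < -μ.re := by linarith
      have hne : μ.re ≠ 0 := by linarith
      field_simp
      rw [mul_assoc, ← mul_pow, neg_mul_neg, one_div, inv_mul_cancel₀ hne, one_pow, mul_one]
    rw [tendsto_congr' hnorm]
    have hb : (0 : ℝ) < -μ.re := by linarith
    have h0 := Real.tendsto_pow_mul_exp_neg_atTop_nhds_zero j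
    have h2 : Tendsto (fun t : ℝ => -μ.re * t) atTop atTop :=
      Tendsto.const_mul_atTop hb tendsto_id
    have h3 : Tendsto (fun t : ℝ => (-μ.re * t) ^ j * Real.exp (-(-μ.re * t))) atTop (𝓝 0) :=
      h0.comp h2
    simpa using h3.const_mul _
  simpa using hscal.smul_const (N ^ j *ᵥ v)

lemma tendsto_exp_hurwitz (G : Matrix (Fin n) (Fin n) ℂ)
    (hG : ∀ μ ∈ spectrum ℂ G, μ.re < 0) (v : Fin n → ℂ) :
    Tendsto (fun t : ℝ => exp ((t : ℂ) • G) *ᵥ v) atTop (𝓝 0) := by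
  set f : Module.End ℂ (Fin n → ℂ) := Matrix.toLinAlgEquiv' G with hf
  let S : Submodule ℂ (Fin n → ℂ) :=
    { carrier := {w | Tendsto (fun t : ℝ => exp ((t : ℂ) • G) *ᵥ w) atTop (𝓝 0)}
      add_mem' := fun h1 h2 => by
        simpa [Matrix.mulVec_add] using h1.add h2
      zero_mem' := by simpa [Matrix.mulVec_zero] using tendsto_const_nhds
      smul_mem' := fun c w h => by
        simpa [Matrix.mulVec_smul] using h.const_smul c }
  suffices hS : (⊤ : Submodule ℂ (Fin n → ℂ)) ≤ S from hS (Submodule.mem_top) 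
  rw [← Module.End.iSup_maxGenEigenspace_eq_top f]
  refine iSup_le fun μ => fun w hw => ?_
  rcases (Module.End.mem_maxGenEigenspace f μ w).mp hw with ⟨k, hk⟩
  by_cases hw0 : w = 0
  · simpa [hw0] using S.zero_mem
  · have hμspec : μ ∈ spectrum ℂ G := by
      have hgen : f.HasGenEigenvalue μ k := by
        rw [Module.End.hasGenEigenvalue_iff]
        intro hbot
        have hwmem : w ∈ f.genEigenspace μ k := by
          rw [Module.End.mem_genEigenspace_nat, LinearMap.mem_ker]
          exact hk
        rw [hbot] at hwmem
        exact hw0 (Submodule.mem_bot ℂ |>.mp hwmem)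
      have hev : f.HasEigenvalue μ := Module.End.hasEigenvalue_of_hasGenEigenvalue hgen
      have := Module.End.hasEigenvalue_iff_mem_spectrum.mp hev
      rwa [hf, AlgEquiv.spectrum_eq] at this
    have hmat : (G - μ • 1) ^ k *ᵥ w = 0 := by
      have h1 : (f - μ • 1) ^ k = Matrix.toLinAlgEquiv' ((G - μ • 1) ^ k) := by
        rw [map_pow, map_sub, _root_.map_smul, _root_.map_one]
      have h2 := hk
      rw [h1, Matrix.toLinAlgEquiv'_apply] at h2
      exact h2
    exact tendsto_exp_genEig G μ (hG μ hμspec) k w hmat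

lemma map_exp_smul (F : Matrix (Fin n) (Fin n) ℝ) (t : ℝ) :
    (exp (t • F)).map Complex.ofReal = exp ((t : ℂ) • F.map Complex.ofReal) := by
  have hcont : Continuous (Complex.ofRealHom.mapMatrix :
      Matrix (Fin n) (Fin n) ℝ →+* Matrix (Fin n) (Fin n) ℂ) := by
    simp only [RingHom.mapMatrix, RingHom.coe_mk, MonoidHom.coe_mk, OneHom.coe_mk]
    exact continuous_id.matrix_map Complex.continuous_ofReal
  have h1 := map_exp (Complex.ofRealHom.mapMatrix :
      Matrix (Fin n) (Fin n) ℝ →+* Matrix (Fin n) (Fin n) ℂ) hcont (t • F)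
  have h2 : (Complex.ofRealHom.mapMatrix (t • F) : Matrix (Fin n) (Fin n) ℂ)
      = (t : ℂ) • F.map Complex.ofReal := by
    ext i j
    simp [RingHom.mapMatrix_apply, Matrix.map_apply]
  have h3 : exp ((t : ℂ) • F.map Complex.ofReal) = exp ((t : ℂ) • F.map Complex.ofReal) :=
    rfl
  calc (exp (t • F)).map Complex.ofReal
      = Complex.ofRealHom.mapMatrix (exp (t • F)) := rfl
    _ = exp (Complex.ofRealHom.mapMatrix (t • F)) := h1
    _ = exp ((t : ℂ) • F.map Complex.ofReal) := by rw [h2, h3]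

lemma tendsto_exp_hurwitz_real (F : Matrix (Fin n) (Fin n) ℝ)
    (hhur : ∀ μ ∈ spectrum ℂ (F.map Complex.ofReal), μ.re < 0) (v : Fin n → ℝ) :
    Tendsto (fun t : ℝ => exp (t • F) *ᵥ v) atTop (𝓝 0) := by
  have hC := tendsto_exp_hurwitz (F.map Complex.ofReal) hhur (fun j => (v j : ℂ))
  rw [tendsto_pi_nhds]
  intro i
  have hCi : Tendsto (fun t : ℝ =>
      (exp ((t : ℂ) • F.map Complex.ofReal) *ᵥ fun j => (v j : ℂ)) i) atTop (𝓝 0) := by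
    have := tendsto_pi_nhds.mp hC i
    simpa using this
  have hkey : ∀ t : ℝ, (exp (t • F) *ᵥ v) i
      = ((exp ((t : ℂ) • F.map Complex.ofReal) *ᵥ fun j => (v j : ℂ)) i).re := by
    intro t
    have h1 := RingHom.map_mulVec Complex.ofRealHom (exp (t • F)) v i
    rw [show ((exp (t • F)).map Complex.ofRealHom) = (exp (t • F)).map Complex.ofReal from rfl,
      map_exp_smul] at h1
    rw [show ((Complex.ofRealHom : ℝ →+* ℂ) ∘ v) = fun j => (v j : ℂ) from rfl] at h1
    rw [← h1]
    simp
  rw [funext hkey]  -- handle via congr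
  have := (Complex.continuous_re.tendsto 0).comp hCi
  simpa [Function.comp_def] using this

lemma lyapunov_psd (F Δ Q : Matrix (Fin n) (Fin n) ℝ)
    (hΔ : Δᵀ = Δ) (hQ : Q.PosSemidef)
    (heq : Fᵀ * Δ + Δ * F = -Q)
    (hhur : ∀ μ ∈ spectrum ℂ (F.map Complex.ofReal), μ.re < 0) :
    Δ.PosSemidef := by
  apply Matrix.PosSemidef.of_dotProduct_mulVec_nonneg
  · show Δᴴ = Δ
    have : Δᴴ = Δᵀ := by ext i j; simp [Matrix.conjTranspose_apply]
    rw [this, hΔ]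
  intro v
  rw [star_trivial]
  set w : ℝ → (Fin n → ℝ) := fun t => exp (t • F) *ᵥ v with hw
  set φ : ℝ → ℝ := fun t => w t ⬝ᵥ (Δ *ᵥ w t) with hφ
  have hw' : ∀ t, HasDerivAt w (F *ᵥ w t) t := by
    intro t
    have h1 := hasDerivAt_exp_smul_const' (𝕂 := ℝ) F t
    have h2 := ((mulVecCLM ℝ n v).hasFDerivAt (x := exp (t • F))).comp_hasDerivAt t h1
    replace h2 : HasDerivAt w ((F * exp (t • F)) *ᵥ v) t := h2
    simpa [hw, Matrix.mulVec_mulVec] using h2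
  have hderiv : ∀ t, HasDerivAt φ ((F *ᵥ w t) ⬝ᵥ (Δ *ᵥ w t) + (w t) ⬝ᵥ (Δ *ᵥ (F *ᵥ w t))) t := by
    intro t
    have hcomp : ∀ i, HasDerivAt (fun s => w s i) ((F *ᵥ w t) i) t :=
      fun i => hasDerivAt_pi.mp (hw' t) i
    have hu : ∀ i, HasDerivAt (fun s => (Δ *ᵥ w s) i) ((Δ *ᵥ (F *ᵥ w t)) i) t := by
      intro i
      have hsum : HasDerivAt (fun s => ∑ j, Δ i j * w s j) (∑ j, Δ i j * (F *ᵥ w t) j) t :=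
        HasDerivAt.fun_sum fun j _ => (hcomp j).const_mul (Δ i j)
      simpa [Matrix.mulVec, dotProduct] using hsum
    have hsum : HasDerivAt (fun s => ∑ i, w s i * (Δ *ᵥ w s) i)
        (∑ i, ((F *ᵥ w t) i * (Δ *ᵥ w t) i + w t i * (Δ *ᵥ (F *ᵥ w t)) i)) t :=
      HasDerivAt.fun_sum fun i _ => (hcomp i).mul (hu i)
    have hφeq : φ = fun s => ∑ i, w s i * (Δ *ᵥ w s) i := by
      funext s; simp [hφ, dotProduct]
    rw [hφeq]
    simpa [dotProduct, Finset.sum_add_distrib] using hsum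
  have hflip : ∀ (x y : Fin n → ℝ), (F *ᵥ x) ⬝ᵥ y = x ⬝ᵥ (Fᵀ *ᵥ y) := by
    intro x y
    rw [Matrix.mulVec_transpose, dotProduct_comm x (y ᵥ* F),
      ← dotProduct_mulVec, dotProduct_comm]
  have hdnonpos : ∀ t, deriv φ t ≤ 0 := by
    intro t
    rw [(hderiv t).deriv]
    have hre : (F *ᵥ w t) ⬝ᵥ (Δ *ᵥ w t) + (w t) ⬝ᵥ (Δ *ᵥ (F *ᵥ w t))
        = w t ⬝ᵥ ((Fᵀ * Δ + Δ * F) *ᵥ w t) := by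
      rw [Matrix.add_mulVec, dotProduct_add]
      congr 1
      · rw [hflip, Matrix.mulVec_mulVec]
      · rw [← Matrix.mulVec_mulVec]
    rw [hre, heq, Matrix.neg_mulVec, dotProduct_neg, neg_nonpos]
    have := hQ.dotProduct_mulVec_nonneg (w t)
    rwa [star_trivial] at this
  have hant : Antitone φ :=
    antitone_of_deriv_nonpos (fun t => (hderiv t).differentiableAt) hdnonpos
  have hwt : Tendsto w atTop (𝓝 0) := tendsto_exp_hurwitz_real F hhur v
  have hcont : Continuous fun u : Fin n → ℝ => u ⬝ᵥ (Δ *ᵥ u) := by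
    simp only [dotProduct, Matrix.mulVec]
    refine continuous_finset_sum _ fun i _ => (continuous_apply i).mul ?_
    exact continuous_finset_sum _ fun j _ => continuous_const.mul (continuous_apply j)
  have hφ0 : Tendsto φ atTop (𝓝 0) := by
    have h := (hcont.tendsto 0).comp hwt
    simpa [Function.comp_def, hφ] using h
  have h2 : (0 : ℝ) ≤ φ 0 :=
    le_of_tendsto hφ0 (eventually_atTop.mpr ⟨0, fun t ht => hant ht⟩)
  have h3 : φ 0 = v ⬝ᵥ (Δ *ᵥ v) := by
    simp [hφ, hw, zero_smul, exp_zero, Matrix.one_mulVec]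
  rwa [h3] at h2

end Aux

/-- Comparison lemma for Riccati equations (Lemma 2): if `X = Xᵀ ⪰ 0` is the
stabilizing solution of `Aᵀ X + X A + Cᵀ C - X M X = 0` (with `A - M X` Hurwitz),
`M ⪰ 0`, and `X̄ = X̄ᵀ` has PSD residue `Aᵀ X̄ + X̄ A + Cᵀ C - X̄ M X̄ ⪰ 0` with
`A - M X̄` Hurwitz, then `X̄ ⪯ X`. -/
theorem riccati_comparison
    (n m : ℕ)
    (A M : Matrix (Fin n) (Fin n) ℝ) (hM : M.PosSemidef)
    (C : Matrix (Fin m) (Fin n) ℝ)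
    (X : Matrix (Fin n) (Fin n) ℝ) (hX : X.PosSemidef)
    (hareX : Aᵀ * X + X * A + Cᵀ * C - X * M * X = 0)
    (hhurX : ∀ μ ∈ spectrum ℂ ((A - M * X).map Complex.ofReal), μ.re < 0)
    (Xbar : Matrix (Fin n) (Fin n) ℝ) (hXbar : Xbarᵀ = Xbar)
    (hres : (Aᵀ * Xbar + Xbar * A + Cᵀ * C - Xbar * M * Xbar).PosSemidef)
    (hhurXbar : ∀ μ ∈ spectrum ℂ ((A - M * Xbar).map Complex.ofReal), μ.re < 0) :
    (X - Xbar).PosSemidef := by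
  have hconj : ∀ P : Matrix (Fin n) (Fin n) ℝ, Pᴴ = Pᵀ := by
    intro P; ext i j; simp [Matrix.conjTranspose_apply]
  have hXt : Xᵀ = X := by rw [← hconj]; exact hX.1
  have hMt : Mᵀ = M := by rw [← hconj]; exact hM.1
  set Δ : Matrix (Fin n) (Fin n) ℝ := X - Xbar with hΔdef
  set R : Matrix (Fin n) (Fin n) ℝ := Aᵀ * Xbar + Xbar * A + Cᵀ * C - Xbar * M * Xbar with hRdef
  have hΔt : Δᵀ = Δ := by
    rw [hΔdef, Matrix.transpose_sub, hXt, hXbar]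
  have hQpsd : (R + Δ * M * Δ).PosSemidef := by
    refine hres.add ?_
    have h1 := hM.conjTranspose_mul_mul_same Δ
    rwa [hconj, hΔt] at h1
  have hC : Cᵀ * C = X * M * X - Aᵀ * X - X * A := by
    have h := hareX
    calc Cᵀ * C = (Aᵀ * X + X * A + Cᵀ * C - X * M * X) + (X * M * X - Aᵀ * X - X * A) := by
          noncomm_ring
      _ = X * M * X - Aᵀ * X - X * A := by rw [h, zero_add]
  have heq : (A - M * X)ᵀ * Δ + Δ * (A - M * X) = -(R + Δ * M * Δ) := by
    rw [Matrix.transpose_sub, Matrix.transpose_mul, hXt, hMt, hΔdef, hRdef, hC]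
    noncomm_ring
  exact lyapunov_psd (A - M * X) Δ (R + Δ * M * Δ) hΔt hQpsd heq hhurX
end
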